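/- Let p be a prime and R a p-torsion free commutative ring such that (ϖ^p) = (p) for some ϖ ∈ R, R is integrally closed in R[1/p], and every element of R/p is a p-th power. Then the p-adic completion of R is a p-torsion free perfectoid ring. -/

import Mathlib

open AdicCompletion

section Aux

variable {p : ℕ} {R : Type*} [CommRing R]

local notation "I" => Ideal.span {(p : R)}
local notation "Â" => AdicCompletion (Ideal.span {(p : R)}) R

lemma mem_smul_top_iff (n : ℕ) (r : R) :
    r ∈ ((I) ^ n • ⊤ : Submodule R R) ↔ (p : R) ^ n ∣ r := by
  rw [show ((I) ^ n • ⊤ : Submodule R R) = Ideal.span {(p : R) ^ n} by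
      rw [smul_eq_mul, Ideal.mul_top, Ideal.span_singleton_pow],
    Ideal.mem_span_singleton]

lemma val_natCast (n k : ℕ) :
    ((k : Â)).val n = Ideal.Quotient.mk ((I) ^ n • ⊤ : Ideal R) (k : R) :=
  (map_natCast (algebraMap R (Â)) k) ▸ rfl

lemma mkQ_eq (n : ℕ) (r : R) :
    Submodule.mkQ ((I) ^ n • ⊤ : Submodule R R) r
      = Ideal.Quotient.mk ((I) ^ n • ⊤ : Ideal R) r := rfl

lemma val_mk_eq (f : AdicCauchySequence (I) R) (n : ℕ) :
    (AdicCompletion.mk (I) R f).val n = Ideal.Quotient.mk ((I) ^ n • ⊤ : Ideal R) (f n) := rfl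

lemma val_algebraMap (n : ℕ) (r : R) :
    (algebraMap R (Â) r).val n = Ideal.Quotient.mk ((I) ^ n • ⊤ : Ideal R) r := rfl

lemma val_p_pow (m n : ℕ) :
    (((p : Â)) ^ n).val m = Ideal.Quotient.mk ((I) ^ m • ⊤ : Ideal R) ((p : R) ^ n) := by
  rw [show ((p : Â)) ^ n = ((p ^ n : ℕ) : Â) by push_cast; ring, val_natCast]
  push_cast; ring_nf

/-- Divisibility by `p^n` in the completion is detected by the `n`-th component. -/
lemma dvd_iff_val_eq_zero (hnzd : (p : R) ∈ nonZeroDivisors R) (n : ℕ) (x : Â) :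
    (p : Â) ^ n ∣ x ↔ x.val n = 0 := by
  induction x using AdicCompletion.induction_on with
  | h f =>
  constructor
  · rintro ⟨y, hy⟩
    rw [hy]
    induction y using AdicCompletion.induction_on with
    | h g =>
    rw [val_mul, val_mk_eq, val_p_pow, ← map_mul,
      Ideal.Quotient.eq_zero_iff_mem, ← Nat.cast_pow]
    exact Ideal.mul_mem_right _ _ (by
      rw [show ((I) ^ n • ⊤ : Ideal R) = Ideal.span {(p : R) ^ n} by
          rw [smul_eq_mul, Ideal.mul_top, Ideal.span_singleton_pow]]
      exact Ideal.subset_span (by push_cast; simp))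
  · intro hval
    rw [val_mk_eq, Ideal.Quotient.eq_zero_iff_mem] at hval
    have hdvd : ∀ m : ℕ, ∃ c : R, f (m + n) = (p : R) ^ n * c := by
      intro m
      have h1 : (f : ℕ → R) (m + n) - f n ∈ ((I) ^ n • ⊤ : Submodule R R) := by
        have := f.property (Nat.le_add_left n m)
        exact SModEq.sub_mem.mp this.symm
      have : (f : ℕ → R) (m + n) ∈ ((I) ^ n • ⊤ : Submodule R R) := by
        simpa using add_mem h1 hval
      obtain ⟨c, hc⟩ := (mem_smul_top_iff n _).mp this
      exact ⟨c, hc⟩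
    choose g hg using hdvd
    have hcauchy : ∀ m, g m ≡ g (m + 1) [SMOD ((I) ^ m • ⊤ : Submodule R R)] := by
      intro m
      rw [SModEq.sub_mem, mem_smul_top_iff]
      have h1 : (f : ℕ → R) (m + 1 + n) - f (m + n) ∈ ((I) ^ (m + n) • ⊤ : Submodule R R) :=
        SModEq.sub_mem.mp (f.property (by omega)).symm
      rw [mem_smul_top_iff] at h1
      obtain ⟨w, hw⟩ := h1
      refine ⟨-w, ?_⟩
      have key : (p : R) ^ n * (g m - g (m + 1)) = (p : R) ^ n * ((p : R) ^ m * -w) := by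
        rw [mul_sub, ← hg m, ← hg (m + 1)]
        have hw2 : (f : ℕ → R) (m + 1 + n) - (f : ℕ → R) (m + n)
            = (p : R) ^ n * ((p : R) ^ m * w) := by
          rw [hw]; ring
        linear_combination -hw2
      exact (mul_cancel_left_mem_nonZeroDivisors (pow_mem hnzd n)).mp key
    set g' : AdicCauchySequence (I) R := AdicCauchySequence.mk _ _ g hcauchy with hg'
    refine ⟨AdicCompletion.mk (I) R g', ?_⟩
    ext m
    rw [val_mk_eq, val_mul, val_p_pow, val_mk_eq, ← map_mul]
    have h1 : Ideal.Quotient.mk ((I) ^ m • ⊤ : Ideal R) ((f : ℕ → R) m)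
        = Ideal.Quotient.mk ((I) ^ m • ⊤ : Ideal R) ((f : ℕ → R) (m + n)) :=
      (AdicCauchySequence.mk_eq_mk (Nat.le_add_right m n) f).symm
    rw [h1, hg m]
    rfl

lemma p_nzd (hnzd : (p : R) ∈ nonZeroDivisors R) :
    (p : Â) ∈ nonZeroDivisors (Â) := by
  rw [mem_nonZeroDivisors_iff_right]
  intro z hz
  induction z using AdicCompletion.induction_on with
  | h f =>
  ext n
  rw [val_mk_eq, val_zero_apply, Ideal.Quotient.eq_zero_iff_mem]
  have h1 : (f : ℕ → R) (n + 1) * (p : R) ∈ ((I) ^ (n + 1) • ⊤ : Submodule R R) := by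
    have := congrArg (fun z : Â => z.val (n + 1)) hz
    simpa only [val_mul, val_mk_eq, val_natCast, val_zero_apply, ← map_mul,
      Ideal.Quotient.eq_zero_iff_mem] using this
  rw [mem_smul_top_iff] at h1
  obtain ⟨w, hw⟩ := h1
  have key : (f : ℕ → R) (n + 1) * (p : R) = ((p : R) ^ n * w) * (p : R) := by
    rw [hw]; ring
  have h2 : (f : ℕ → R) (n + 1) = (p : R) ^ n * w := by
    have h0 := sub_eq_zero.mpr key
    rw [← sub_mul] at h0
    exact sub_eq_zero.mp (mem_nonZeroDivisors_iff_right.mp hnzd _ h0)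
  have h3 : Ideal.Quotient.mk ((I) ^ n • ⊤ : Ideal R) ((f : ℕ → R) n)
      = Ideal.Quotient.mk ((I) ^ n • ⊤ : Ideal R) ((f : ℕ → R) (n + 1)) :=
    (AdicCauchySequence.mk_eq_mk (Nat.le_succ n) f).symm
  rw [← Ideal.Quotient.eq_zero_iff_mem, h3, Ideal.Quotient.eq_zero_iff_mem, h2,
    mem_smul_top_iff]
  exact Dvd.intro w rfl

lemma mem_J_smul_iff (hnzd : (p : R) ∈ nonZeroDivisors R) (n : ℕ) (x : Â) :
    x ∈ ((Ideal.span {(p : Â)}) ^ n • ⊤ : Submodule (Â) (Â)) ↔ x.val n = 0 := by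
  rw [show ((Ideal.span {(p : Â)}) ^ n • ⊤ : Submodule (Â) (Â))
      = Ideal.span {(p : Â) ^ n} by rw [smul_eq_mul, Ideal.mul_top, Ideal.span_singleton_pow],
    Ideal.mem_span_singleton]
  exact dvd_iff_val_eq_zero hnzd n x

lemma adic_complete (hnzd : (p : R) ∈ nonZeroDivisors R) :
    IsAdicComplete (Ideal.span {(p : Â)}) (Â) := by
  have h1 : IsHausdorff (Ideal.span {(p : Â)}) (Â) := by
    constructor
    intro x hx
    ext n
    rw [val_zero_apply, ← mem_J_smul_iff hnzd n x]
    exact SModEq.zero.mp (hx n)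
  have h2 : IsPrecomplete (Ideal.span {(p : Â)}) (Â) := by
    constructor
    intro f hf
    have prop : ∀ {m n : ℕ} (hmn : m ≤ n),
        AdicCompletion.transitionMap (I) R hmn ((f n).val n) = (f m).val m := by
      intro m n hmn
      have h1 : (f m - f n).val m = 0 := by
        rw [← mem_J_smul_iff hnzd m]
        exact SModEq.sub_mem.mp (hf hmn)
      rw [val_sub_apply, sub_eq_zero] at h1
      rw [(f n).property hmn, ← h1]
    refine ⟨(⟨fun n => (f n).val n, prop⟩ : Â), fun n => ?_⟩
    exact SModEq.sub_mem.mpr ((mem_J_smul_iff hnzd n _).mpr (sub_eq_zero.mpr rfl))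
  exact ⟨⟩

/-- The key consequence of integral closedness at the level of `R`. -/
lemma frob_kernel (hp : p.Prime) (hnzd : (p : R) ∈ nonZeroDivisors R) (ϖ : R)
    (hspan : Ideal.span {ϖ ^ p} = Ideal.span {(p : R)})
    (hic : ∀ z : Localization.Away (p : R), IsIntegral R z →
      ∃ x : R, algebraMap R (Localization.Away (p : R)) x = z)
    (x : R) (hx : x ^ p ∈ Ideal.span {(p : R)}) : x ∈ Ideal.span {ϖ} := by
  obtain ⟨v, hv⟩ : ϖ ^ p ∣ (p : R) :=
    Ideal.span_singleton_le_span_singleton.mp (le_of_eq hspan.symm)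
  obtain ⟨r, hr⟩ : (p : R) ∣ x ^ p := Ideal.mem_span_singleton.mp hx
  set K := Localization.Away (p : R)
  set alg := algebraMap R K with halg
  have hinj : Function.Injective alg := by
    refine IsLocalization.injective (M := Submonoid.powers (p : R)) K (fun y hy => ?_)
    obtain ⟨n, rfl⟩ := hy
    exact pow_mem hnzd n
  have hunit_p : IsUnit (alg (p : R)) :=
    IsLocalization.map_units K ⟨(p : R), Submonoid.mem_powers _⟩
  have hϖp : ϖ * (ϖ ^ (p - 1) * v) = (p : R) := by
    rw [← mul_assoc, ← pow_succ', show p - 1 + 1 = p by have := hp.two_le; omega, ← hv]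
  have hunit_ϖ : IsUnit (alg ϖ) := by
    refine isUnit_of_mul_isUnit_left (y := alg (ϖ ^ (p - 1) * v)) ?_
    rw [← map_mul, hϖp]
    exact hunit_p
  set w := hunit_ϖ.unit with hw
  have hw' : (w : K) = alg ϖ := hunit_ϖ.unit_spec
  set z : K := alg x * (↑w⁻¹ : K) with hz
  have hzϖ : z * alg ϖ = alg x := by
    rw [hz, ← hw', mul_assoc, Units.inv_mul, mul_one]
  have hzp : z ^ p = alg (v * r) := by
    have hcan : alg ϖ ^ p * z ^ p = alg ϖ ^ p * alg (v * r) := by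
      rw [show alg ϖ ^ p * z ^ p = (z * alg ϖ) ^ p by ring, hzϖ, ← map_pow, ← map_pow,
        ← map_mul]
      congr 1
      rw [hr, hv]; ring
    exact (hunit_ϖ.pow p).mul_left_cancel hcan
  have hint : IsIntegral R z := by
    refine ⟨Polynomial.X ^ p - Polynomial.C (v * r),
      Polynomial.monic_X_pow_sub_C _ hp.ne_zero, ?_⟩
    simp only [Polynomial.eval₂_sub, Polynomial.eval₂_pow, Polynomial.eval₂_X,
      Polynomial.eval₂_C, hzp, ← halg, sub_self]
  obtain ⟨x', hx'⟩ := hic z hint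
  refine Ideal.mem_span_singleton.mpr ⟨x', ?_⟩
  apply hinj
  rw [map_mul, hx', mul_comm, hzϖ]

lemma cond_c (hp : p.Prime) (hnzd : (p : R) ∈ nonZeroDivisors R) (ϖ : R)
    (hspan : Ideal.span {ϖ ^ p} = Ideal.span {(p : R)})
    (hic : ∀ z : Localization.Away (p : R), IsIntegral R z →
      ∃ x : R, algebraMap R (Localization.Away (p : R)) x = z)
    (x : Â) (hx : x ^ p ∈ Ideal.span {(p : Â)}) :
    x ∈ Ideal.span {algebraMap R (Â) ϖ} := by
  obtain ⟨v, hv⟩ : ϖ ^ p ∣ (p : R) :=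
    Ideal.span_singleton_le_span_singleton.mp (le_of_eq hspan.symm)
  have hϖnzd : ϖ ∈ nonZeroDivisors R := by
    rw [mem_nonZeroDivisors_iff_right]
    intro a ha
    refine (mem_nonZeroDivisors_iff_right.mp hnzd) a ?_
    calc a * (p : R) = (a * ϖ) * (ϖ ^ (p - 1) * v) := by
          rw [hv, show ϖ ^ p = ϖ * ϖ ^ (p - 1) by
            rw [← pow_succ', show p - 1 + 1 = p by have := hp.two_le; omega]]
          ring
      _ = 0 := by rw [ha, zero_mul]
  obtain ⟨c, hc⟩ : (p : Â) ∣ x ^ p := Ideal.mem_span_singleton.mp hx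
  induction x using AdicCompletion.induction_on with
  | h f =>
  have hfp : ∀ n : ℕ, ((f : ℕ → R) (n + 1)) ^ p ∈ Ideal.span {(p : R)} := by
    intro n
    obtain ⟨t, ht⟩ := Ideal.Quotient.mk_surjective (c.val (n + 1))
    have h1 := congrArg (fun z : Â => z.val (n + 1)) hc
    rw [show ((AdicCompletion.mk (I) R f) ^ p).val (n + 1)
        = ((AdicCompletion.mk (I) R f).val (n + 1)) ^ p from rfl, val_mk_eq,
      val_mul, val_natCast, ← map_pow, ← ht, ← map_mul] at h1
    have h2 : ((f : ℕ → R) (n + 1)) ^ p - (p : R) * t ∈ ((I) ^ (n + 1) • ⊤ : Submodule R R) :=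
      Ideal.Quotient.eq.mp h1
    rw [mem_smul_top_iff] at h2
    obtain ⟨w, hw⟩ := h2
    rw [Ideal.mem_span_singleton]
    exact ⟨t + (p : R) ^ n * w, by rw [show ((f : ℕ → R) (n + 1)) ^ p
      = ((f : ℕ → R) (n + 1) ^ p - (p : R) * t) + (p : R) * t by ring, hw, pow_succ]; ring⟩
  have hdvd : ∀ n : ℕ, ∃ s : R, (f : ℕ → R) (n + 1) = ϖ * s := fun n =>
    Ideal.mem_span_singleton.mp (frob_kernel hp hnzd ϖ hspan hic _ (hfp n))
  choose g hg using hdvd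
  have hcauchy : ∀ m, g m ≡ g (m + 1) [SMOD ((I) ^ m • ⊤ : Submodule R R)] := by
    intro m
    rw [SModEq.sub_mem, mem_smul_top_iff]
    have h1 : (f : ℕ → R) (m + 1 + 1) - (f : ℕ → R) (m + 1)
        ∈ ((I) ^ (m + 1) • ⊤ : Submodule R R) :=
      SModEq.sub_mem.mp (f.property (by omega)).symm
    rw [mem_smul_top_iff] at h1
    obtain ⟨w, hw⟩ := h1
    refine ⟨-(ϖ ^ (p - 1) * v * w), ?_⟩
    have key : (g m - g (m + 1) - (p : R) ^ m * -(ϖ ^ (p - 1) * v * w)) * ϖ = 0 := by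
      have hϖ1 : ϖ * ϖ ^ (p - 1) = ϖ ^ p := by
        rw [← pow_succ', show p - 1 + 1 = p by have := hp.two_le; omega]
      have hthis : ϖ * (g (m + 1) - g m) = (p : R) ^ (m + 1) * w := by
        rw [mul_sub, ← hg m, ← hg (m + 1)]
        linear_combination hw
      linear_combination (-1 : R) * hthis - (p : R) ^ m * w * hv
        + (p : R) ^ m * v * w * hϖ1
    have := mem_nonZeroDivisors_iff_right.mp hϖnzd _ key
    linear_combination this
  refine Ideal.mem_span_singleton.mpr
    ⟨AdicCompletion.mk (I) R (AdicCauchySequence.mk _ _ g hcauchy), ?_⟩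
  ext m
  rw [val_mk_eq, val_mul, val_mk_eq]
  have h1 : Ideal.Quotient.mk ((I) ^ m • ⊤ : Ideal R) ((f : ℕ → R) m)
      = Ideal.Quotient.mk ((I) ^ m • ⊤ : Ideal R) ((f : ℕ → R) (m + 1)) :=
    (AdicCauchySequence.mk_eq_mk (Nat.le_succ m) f).symm
  rw [h1, hg m, val_algebraMap, ← map_mul]
  rfl

end Aux

/-- The defining conditions on `ϖ'` for a `p`-torsion free perfectoid ring. -/
def PerfectoidCond (p : ℕ) (R : Type*) [CommRing R] (ϖ : R) : Prop :=
  Ideal.span {ϖ ^ p} = Ideal.span {(p : R)} ∧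
  (∀ y : R, ∃ x : R, y - x ^ p ∈ Ideal.span {(p : R)}) ∧
  (∀ x : R, x ^ p ∈ Ideal.span {(p : R)} → x ∈ Ideal.span {ϖ})

/-- if R is p-torsion free, (ϖ^p) = (p), R is integrally closed in R[1/p],
and Frobenius is surjective on R/p, then the p-adic completion of R is a p-torsion
free perfectoid ring. -/
theorem stmt_9 {p : ℕ} (hp : p.Prime) (R : Type*) [CommRing R]
    (hnzd : (p : R) ∈ nonZeroDivisors R) (ϖ : R)
    (hspan : Ideal.span {ϖ ^ p} = Ideal.span {(p : R)})
    (hic : ∀ z : Localization.Away (p : R), IsIntegral R z →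
      ∃ x : R, algebraMap R (Localization.Away (p : R)) x = z)
    (hsurj : ∀ y : R ⧸ Ideal.span {(p : R)}, ∃ x, x ^ p = y) :
    (p : AdicCompletion (Ideal.span {(p : R)}) R) ∈
        nonZeroDivisors (AdicCompletion (Ideal.span {(p : R)}) R) ∧
      IsAdicComplete (Ideal.span {(p : AdicCompletion (Ideal.span {(p : R)}) R)})
        (AdicCompletion (Ideal.span {(p : R)}) R) ∧
      ∃ ϖ' : AdicCompletion (Ideal.span {(p : R)}) R,
        PerfectoidCond p (AdicCompletion (Ideal.span {(p : R)}) R) ϖ' := by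
  set Rc := AdicCompletion (Ideal.span {(p : R)}) R
  set alg := algebraMap R Rc with halg
  refine ⟨p_nzd hnzd, adic_complete hnzd, alg ϖ, ?_, ?_, ?_⟩
  · -- span {(alg ϖ)^p} = span {(p : Rc)}
    have hpc : (p : Rc) = alg (p : R) := (map_natCast alg p).symm
    obtain ⟨u, hu⟩ : (p : R) ∣ ϖ ^ p :=
      Ideal.span_singleton_le_span_singleton.mp (le_of_eq hspan)
    obtain ⟨v, hv⟩ : ϖ ^ p ∣ (p : R) :=
      Ideal.span_singleton_le_span_singleton.mp (le_of_eq hspan.symm)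
    refine le_antisymm (Ideal.span_singleton_le_span_singleton.mpr ⟨alg u, ?_⟩)
      (Ideal.span_singleton_le_span_singleton.mpr ⟨alg v, ?_⟩)
    · rw [← map_pow, hpc, ← map_mul, ← hu]
    · rw [← map_pow, hpc, ← map_mul, ← hv]
  · -- Frobenius surjective mod p
    intro y
    induction y using AdicCompletion.induction_on with
    | h f =>
    obtain ⟨xq, hxq⟩ := hsurj (Ideal.Quotient.mk _ ((f : ℕ → R) 1))
    obtain ⟨s, rfl⟩ := Ideal.Quotient.mk_surjective xq
    refine ⟨alg s, ?_⟩
    have h1 : (f : ℕ → R) 1 - s ^ p ∈ Ideal.span {(p : R)} := by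
      rw [← Ideal.Quotient.eq_zero_iff_mem, map_sub, map_pow, hxq, sub_self]
    rw [Ideal.mem_span_singleton, ← pow_one ((p : Rc))]
    rw [dvd_iff_val_eq_zero hnzd 1]
    rw [val_sub_apply, val_mk_eq, show ((alg s) ^ p).val 1 = ((alg s).val 1) ^ p from rfl,
      val_algebraMap]
    rw [← map_pow, ← map_sub, Ideal.Quotient.eq_zero_iff_mem, mem_smul_top_iff, pow_one]
    exact Ideal.mem_span_singleton.mp h1
  · -- x^p ∈ (p) → x ∈ (ϖ')
    intro x hx
    exact cond_c hp hnzd ϖ hspan hic x hx
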